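/- Let f(x,y,a) = y + 4x/a - (2a/(a²+16))(x - 4y/a)² + a(a²+16)/8. There exist a̅ > 0 and r > 0 such that for every (x,y) with 0 < ‖(x,y)‖ < r and x < (1/2)y², there is a unique a ∈ (-a̅, 0) with f(x,y,a) = 0. -/

import Mathlib

/-- The defining function `f` of the level parabolas. -/
noncomputable def fullerf (x y a : ℝ) : ℝ :=
  y + 4 * x / a - (2 * a / (a ^ 2 + 16)) * (x - 4 * y / a) ^ 2 + a * (a ^ 2 + 16) / 8

namespace FullerAux

/-- numerator polynomial -/
noncomputable def fnum (x y a : ℝ) : ℝ :=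
  a^3*y + 4*a^2*x + 16*a*y + 64*x - 2*a^2*x^2 + 16*x*y*a - 32*y^2 + a^2*(a^2+16)^2/8

/-- denominator -/
noncomputable def fden (a : ℝ) : ℝ := a * (a^2 + 16)

/-- derivative of the numerator -/
noncomputable def fnum' (x y a : ℝ) : ℝ :=
  3*a^2*y + 8*a*x + 16*y + 16*x*y - 4*a*x^2 + a*(a^2+16)*(3*a^2+16)/4

lemma fden_neg {a : ℝ} (ha : a < 0) : fden a < 0 :=
  mul_neg_of_neg_of_pos ha (by positivity)

lemma fden_ne {a : ℝ} (ha : a ≠ 0) : fden a ≠ 0 := by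
  have h16 : a^2 + 16 ≠ 0 := by positivity
  exact mul_ne_zero ha h16

lemma fullerf_eq (x y : ℝ) {a : ℝ} (ha : a ≠ 0) :
    fullerf x y a = fnum x y a / fden a := by
  have h16 : a^2 + 16 ≠ 0 := by positivity
  unfold fullerf fnum fden
  field_simp
  ring

lemma hasDerivAt_fnum (x y a : ℝ) :
    HasDerivAt (fun b => fnum x y b) (fnum' x y a) a := by
  have h : HasDerivAt (fun b : ℝ => b) 1 a := hasDerivAt_id a
  have t1 := (h.pow 3).mul_const y
  have t2 := ((h.pow 2).const_mul 4).mul_const x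
  have t3 := (h.const_mul 16).mul_const y
  have t5 := ((h.pow 2).const_mul 2).mul_const (x^2)
  have t6 := h.const_mul (16*x*y)
  have t8 := ((h.pow 2).mul (((h.pow 2).add_const 16).pow 2)).div_const 8
  have H2 := (((((t1.add t2).add t3).add_const (64*x)).sub t5).add t6).add
    ((t8.add_const (-(32*y^2))))
  refine (H2.congr_deriv ?_).congr_of_eventuallyEq (Filter.Eventually.of_forall fun b => ?_)
  · unfold fnum'; push_cast; simp only [Pi.pow_apply]; ring
  · unfold fnum; simp only [Pi.add_apply, Pi.sub_apply, Pi.mul_apply, Pi.pow_apply]; ring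

lemma hasDerivAt_fden (a : ℝ) :
    HasDerivAt fden (3*a^2 + 16) a := by
  have h : HasDerivAt (fun b : ℝ => b) 1 a := hasDerivAt_id a
  have H := h.mul ((h.pow 2).add_const 16)
  exact H.congr_deriv (by push_cast; simp only [Pi.pow_apply]; ring)

lemma hasDerivAt_fullerf (x y : ℝ) {a : ℝ} (ha : a ≠ 0) :
    HasDerivAt (fun b => fullerf x y b)
      ((fnum' x y a * fden a - fnum x y a * (3*a^2+16)) / fden a ^ 2) a := by
  have H := (hasDerivAt_fnum x y a).div (hasDerivAt_fden a) (fden_ne ha)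
  refine H.congr_of_eventuallyEq ?_
  filter_upwards [compl_singleton_mem_nhds ha] with b hb
  exact fullerf_eq x y hb

/-- The key positivity of the derivative numerator. -/
lemma deriv_num_pos {x y a : ℝ} (hs : x^2 + y^2 < 1/10000)
    (hxy : x < (1/2) * y^2) (ha1 : a < 0) :
    0 < fnum' x y a * fden a - fnum x y a * (3*a^2+16) := by
  have h1 : (0:ℝ) < 1/2*y^2 - x := by linarith
  have h2 : (0:ℝ) ≤ 1/10000 - x^2 - y^2 := by linarith
  unfold fnum' fden fnum
  nlinarith [sq_nonneg (x*a^2 - y*a), mul_nonneg (sq_nonneg a) h1.le,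
    mul_nonneg (sq_nonneg (a^2)) h1.le, mul_nonneg (sq_nonneg a) h2,
    mul_nonneg (sq_nonneg (a^2)) h2,
    sq_nonneg (a^3), sq_nonneg (a^4), sq_nonneg (a*y), sq_nonneg (a^2*y), sq_nonneg (a^2*x),
    h1, sq_nonneg a]

end FullerAux

open FullerAux in
/-- Existence and uniqueness of the implicit level `a` with `f(x,y,a) = 0`. -/
theorem fullerf_implicit_exists_unique :
    ∃ abar > (0:ℝ), ∃ r > (0:ℝ), ∀ x y : ℝ,
      0 < Real.sqrt (x ^ 2 + y ^ 2) → Real.sqrt (x ^ 2 + y ^ 2) < r →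
      x < (1 / 2) * y ^ 2 →
        ∃! a : ℝ, a ∈ Set.Ioo (-abar) 0 ∧ fullerf x y a = 0 := by
  refine ⟨1, one_pos, 1/100, by norm_num, fun x y h0 hr hxy => ?_⟩
  have hs : x^2 + y^2 < 1/10000 := by
    nlinarith [Real.sq_sqrt (show (0:ℝ) ≤ x^2+y^2 by positivity),
      Real.sqrt_nonneg (x^2+y^2)]
  have hxle : x ≤ 1/100 := by nlinarith [sq_nonneg y]
  have hxge : -(1/100) ≤ x := by nlinarith [sq_nonneg y]
  have hyle : y ≤ 1/100 := by nlinarith [sq_nonneg x]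
  have hyge : -(1/100) ≤ y := by nlinarith [sq_nonneg x]
  have h1 : (0:ℝ) < 1/2*y^2 - x := by linarith
  obtain ⟨a₀, ha₀_def⟩ : ∃ a₀ : ℝ, a₀ = -((1/2*y^2 - x)/100) := ⟨_, rfl⟩
  have ha₀neg : a₀ < 0 := by rw [ha₀_def]; linarith
  have ha₀ge : -(3/10000) ≤ a₀ := by rw [ha₀_def]; nlinarith [sq_nonneg x]
  have ha₀gt : (-1:ℝ) < a₀ := by
    have h : (-1:ℝ) < -(3/10000) := by norm_num
    exact lt_of_lt_of_le h ha₀ge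
  have ha₀ne : a₀ ≠ 0 := ne_of_lt ha₀neg
  have ha₀sq : a₀^2 ≤ 9/100000000 := by nlinarith
  -- value at a₀ is positive
  have hfact : fnum x y a₀ = a₀ * (6400 + a₀^2*y + 4*a₀*x + 16*y - 2*a₀*x^2 + 16*x*y
      + a₀*(a₀^2+16)^2/8) := by
    rw [ha₀_def]; unfold fnum; ring
  have hnum0 : fnum x y a₀ < 0 := by
    rw [hfact]
    apply mul_neg_of_neg_of_pos ha₀neg
    nlinarith [sq_nonneg a₀, sq_nonneg (a₀*x), sq_nonneg (a₀*y)]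
  have hg0 : 0 < fullerf x y a₀ := by
    rw [fullerf_eq x y ha₀ne]
    exact div_pos_of_neg_of_neg hnum0 (fden_neg ha₀neg)
  -- value at -1 is negative
  have hgneg : fullerf x y (-1) < 0 := by
    rw [fullerf_eq x y (by norm_num : (-1:ℝ) ≠ 0)]
    apply div_neg_of_pos_of_neg
    · unfold fnum; norm_num; nlinarith [sq_nonneg x, sq_nonneg y]
    · exact fden_neg (by norm_num)
  -- continuity
  have hcont : ContinuousOn (fun b => fullerf x y b) (Set.Icc (-1) a₀) := by
    intro b hb
    have hbne : b ≠ 0 := ne_of_lt (lt_of_le_of_lt hb.2 ha₀neg)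
    exact (hasDerivAt_fullerf x y hbne).continuousAt.continuousWithinAt
  -- strict monotonicity on Ico (-1) 0
  have hmono : StrictMonoOn (fun b => fullerf x y b) (Set.Ico (-1:ℝ) 0) := by
    apply strictMonoOn_of_deriv_pos (convex_Ico _ _)
    · intro b hb
      have hbne : b ≠ 0 := ne_of_lt hb.2
      exact (hasDerivAt_fullerf x y hbne).continuousAt.continuousWithinAt
    · rw [interior_Ico]
      intro b hb
      have hbne : b ≠ 0 := ne_of_lt hb.2
      rw [(hasDerivAt_fullerf x y hbne).deriv]
      exact div_pos (deriv_num_pos hs hxy hb.2) (pow_two_pos_of_ne_zero (fden_ne hbne))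
  -- intermediate value theorem
  have hle : (-1:ℝ) ≤ a₀ := le_of_lt ha₀gt
  obtain ⟨c, hc, hgc⟩ := intermediate_value_Ioo hle hcont ⟨hgneg, hg0⟩
  have hcIoo : c ∈ Set.Ioo (-1:ℝ) 0 := ⟨hc.1, lt_trans hc.2 ha₀neg⟩
  refine ⟨c, ⟨by simpa using hcIoo, hgc⟩, ?_⟩
  rintro b ⟨hb, hgb⟩
  have hb' : b ∈ Set.Ioo (-1:ℝ) 0 := by simpa using hb
  exact hmono.injOn ⟨hb'.1.le, hb'.2⟩ ⟨hcIoo.1.le, hcIoo.2⟩ (hgb.trans hgc.symm)
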